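/- arXiv:0803.2048 — 2 statements merged into one kernel-verified Lean document; each statement's English description precedes it below -/
import Mathlib

section
/- Let g be a finite-dimensional nilpotent Lie algebra over ℂ, C^k g* := Ann(C_k g) ⊆ g* the annihilator filtration of the lower central series, and W^k := span{α ∧ β ∈ Λ²g* : α ∈ C^i g*, β ∈ C^j g*, i + j ≤ k}. Then for α ∈ g*: dα ∈ W^k if and only if α ∈ C^k g*, where d is the Chevalley–Eilenberg differential. -/
/-- The Lie bracket of `g`, bundled as a bilinear map. -/
noncomputable def bracketBilin (g : Type*) [LieRing g] [LieAlgebra ℂ g] :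
    g →ₗ[ℂ] g →ₗ[ℂ] g :=
  LinearMap.mk₂ ℂ (fun x y => ⁅x, y⁆) add_lie smul_lie lie_add lie_smul

/-- The Chevalley–Eilenberg differential `d : g* → Λ²g*`, `(dα)(x,y) = -α⁅x,y⁆`,
with `Λ²g*` realised as bilinear forms on `g`. -/
noncomputable def dCE (g : Type*) [LieRing g] [LieAlgebra ℂ g] (α : Module.Dual ℂ g) :
    g →ₗ[ℂ] g →ₗ[ℂ] ℂ :=
  -((bracketBilin g).compr₂ α)

/-- The wedge `α ∧ β` of two linear functionals, as a bilinear form: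
`(α ∧ β)(u,v) = α(u)β(v) - β(u)α(v)`. -/
noncomputable def wedgeDual (g : Type*) [LieRing g] [LieAlgebra ℂ g]
    (α β : Module.Dual ℂ g) : g →ₗ[ℂ] g →ₗ[ℂ] ℂ :=
  α.smulRight β - β.smulRight α

lemma dCE_apply (g : Type*) [LieRing g] [LieAlgebra ℂ g] (α : Module.Dual ℂ g) (x y : g) :
    dCE g α x y = -α ⁅x, y⁆ := by
  simp [dCE, bracketBilin]

lemma lcs_lie_right {g : Type*} [LieRing g] [LieAlgebra ℂ g] (a : ℕ) (x u : g)
    (hx : x ∈ LieModule.lowerCentralSeries ℂ g g a) :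
    ⁅x, u⁆ ∈ LieModule.lowerCentralSeries ℂ g g (a + 1) := by
  rw [← lie_skew, LieModule.lowerCentralSeries_succ]
  exact neg_mem (LieSubmodule.lie_mem_lie (LieSubmodule.mem_top u) hx)

/-- bracket of elements of lower central series terms. -/
lemma lcs_lie {g : Type*} [LieRing g] [LieAlgebra ℂ g] (b a : ℕ) (x y : g)
    (hx : x ∈ LieModule.lowerCentralSeries ℂ g g a)
    (hy : y ∈ LieModule.lowerCentralSeries ℂ g g b) :
    ⁅x, y⁆ ∈ LieModule.lowerCentralSeries ℂ g g (a + b + 1) := by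
  induction b generalizing a x y with
  | zero => exact lcs_lie_right a x y hx
  | succ b ih =>
    have hy' : y ∈ (Submodule.span ℂ {m : g | ∃ u ∈ (⊤ : LieIdeal ℂ g),
        ∃ n ∈ LieModule.lowerCentralSeries ℂ g g b, ⁅u, n⁆ = m}) := by
      rw [← LieSubmodule.lieIdeal_oper_eq_linear_span']
      rw [← LieModule.lowerCentralSeries_succ]
      exact hy
    have goal : ∀ m ∈ Submodule.span ℂ {m : g | ∃ u ∈ (⊤ : LieIdeal ℂ g),
        ∃ n ∈ LieModule.lowerCentralSeries ℂ g g b, ⁅u, n⁆ = m},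
        ⁅x, m⁆ ∈ LieModule.lowerCentralSeries ℂ g g (a + (b+1) + 1) := by
      intro m hm
      refine Submodule.span_induction ?_ ?_ ?_ ?_ hm
      · rintro m ⟨u, -, n, hn, rfl⟩
        have hj : ⁅x, ⁅u, n⁆⁆ = ⁅⁅x, u⁆, n⁆ + ⁅u, ⁅x, n⁆⁆ := leibniz_lie x u n
        rw [hj]
        refine add_mem ?_ ?_
        · have h1 : ⁅x, u⁆ ∈ LieModule.lowerCentralSeries ℂ g g (a + 1) :=
            lcs_lie_right a x u hx
          have h2 := ih (a+1) ⁅x,u⁆ n h1 hn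
          have heq : a + 1 + b + 1 = a + (b+1) + 1 := by omega
          rwa [heq] at h2
        · have h1 : ⁅x, n⁆ ∈ LieModule.lowerCentralSeries ℂ g g (a + b + 1) := ih a x n hx hn
          have h2 : ⁅u, ⁅x,n⁆⁆ ∈ LieModule.lowerCentralSeries ℂ g g (a + b + 1 + 1) := by
            rw [LieModule.lowerCentralSeries_succ]
            exact LieSubmodule.lie_mem_lie (LieSubmodule.mem_top _) h1
          have heq : a + b + 1 + 1 = a + (b+1) + 1 := by omega
          rwa [heq] at h2
      · simp
      · intro m₁ m₂ _ _ h1 h2; rw [lie_add]; exact add_mem h1 h2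
      · intro c m _ h1; rw [lie_smul]; exact Submodule.smul_mem _ c h1
    exact goal y hy'

/-- tensor decomposition lemma. -/
lemma tensorDecomp {g : Type*} [LieRing g] [LieAlgebra ℂ g] [FiniteDimensional ℂ g]
    (S T : Submodule ℂ g) (B : g →ₗ[ℂ] g →ₗ[ℂ] ℂ)
    (hS : ∀ x ∈ S, B x = 0) (hT : ∀ x : g, ∀ y ∈ T, B x y = 0) :
    B - B.flip ∈ Submodule.span ℂ {W : g →ₗ[ℂ] g →ₗ[ℂ] ℂ | ∃ β γ : Module.Dual ℂ g,
      (∀ z ∈ S, β z = 0) ∧ (∀ z ∈ T, γ z = 0) ∧ W = wedgeDual g β γ} := by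
  set A := T.dualAnnihilator with hA
  have hmem : ∀ x, B x ∈ A := fun x => (Submodule.mem_dualAnnihilator _).mpr (hT x)
  let B' : g →ₗ[ℂ] A := LinearMap.codRestrict A B hmem
  let bA := Module.finBasis ℂ A
  let β : Fin (Module.finrank ℂ A) → Module.Dual ℂ g := fun t => (bA.coord t).comp B'
  have hB : ∀ x y, B x y = ∑ t, β t x * (bA t : Module.Dual ℂ g) y := by
    intro x y
    have h1 : ((B' x : Module.Dual ℂ g)) = ∑ t, bA.repr (B' x) t • (bA t : Module.Dual ℂ g) := by
      conv_lhs => rw [← bA.sum_repr (B' x)]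
      push_cast
      rfl
    have h2 : B x y = (B' x : Module.Dual ℂ g) y := rfl
    rw [h2, h1]
    simp [β, Module.Basis.coord_apply, LinearMap.sum_apply]
  have key : B - B.flip = ∑ t, wedgeDual g (β t) (bA t) := by
    ext x y
    simp only [LinearMap.sub_apply, LinearMap.flip_apply, LinearMap.coe_sum,
      Finset.sum_apply, wedgeDual, LinearMap.smulRight_apply, LinearMap.smul_apply, smul_eq_mul]
    rw [hB x y, hB y x, ← Finset.sum_sub_distrib]
    exact Finset.sum_congr rfl fun t _ => by ring
  rw [key]
  refine Submodule.sum_mem _ fun t _ => Submodule.subset_span ?_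
  refine ⟨β t, bA t, ?_, ?_, rfl⟩
  · intro z hz
    have hz0 : B' z = 0 := Subtype.ext (hS z hz)
    simp only [β, LinearMap.comp_apply, hz0, map_zero]
  · exact fun z hz => (Submodule.mem_dualAnnihilator _).mp (bA t).2 z hz

/-- For a finite-dimensional nilpotent complex Lie algebra `g`, with
`C^i g* = Ann(C_i g)` and `W^k` the span of wedges `α ∧ β` with `α ∈ C^i g*`, `β ∈ C^j g*`,
`i + j ≤ k`, one has `dα ∈ W^k ↔ α ∈ C^k g*` (for `k ≥ 1`). -/
theorem stmt7 (g : Type*) [LieRing g] [LieAlgebra ℂ g] [FiniteDimensional ℂ g]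
    [LieModule.IsNilpotent g g] (k : ℕ) (hk : 1 ≤ k) (α : Module.Dual ℂ g) :
    dCE g α ∈ Submodule.span ℂ {W : g →ₗ[ℂ] g →ₗ[ℂ] ℂ |
        ∃ i j : ℕ, i + j ≤ k ∧ ∃ β γ : Module.Dual ℂ g,
          (∀ z ∈ LieModule.lowerCentralSeries ℂ g g i, β z = 0) ∧
          (∀ z ∈ LieModule.lowerCentralSeries ℂ g g j, γ z = 0) ∧
          W = wedgeDual g β γ} ↔
      ∀ z ∈ LieModule.lowerCentralSeries ℂ g g k, α z = 0 := by
  constructor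
  · -- easy direction
    intro h z hz
    -- key: every element of the span vanishes on lcs (k-1) × g
    have key : ∀ m ∈ LieModule.lowerCentralSeries ℂ g g (k-1), ∀ x : g, dCE g α m x = 0 := by
      intro m hm x
      refine Submodule.span_induction ?_ ?_ ?_ ?_ h
      · rintro W ⟨i, j, hij, β, γ, hβ, hγ, rfl⟩
        simp only [wedgeDual, LinearMap.sub_apply, LinearMap.smulRight_apply,
          LinearMap.smul_apply, smul_eq_mul]
        have t1 : β m * γ x = 0 := by
          by_cases hi : i ≤ k - 1
          · rw [hβ m (LieModule.antitone_lowerCentralSeries ℂ g g hi hm), zero_mul]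
          · have hj0 : j = 0 := by omega
            subst hj0
            rw [hγ x (LieSubmodule.mem_top x), mul_zero]
        have t2 : γ m * β x = 0 := by
          by_cases hj : j ≤ k - 1
          · rw [hγ m (LieModule.antitone_lowerCentralSeries ℂ g g hj hm), zero_mul]
          · have hi0 : i = 0 := by omega
            subst hi0
            rw [hβ x (LieSubmodule.mem_top x), mul_zero]
        rw [t1, t2, sub_zero]
      · simp
      · intro B C _ _ h1 h2; simp [h1, h2]
      · intro c B _ h1; simp [h1]
    have hz' : z ∈ Submodule.span ℂ {m : g | ∃ u ∈ (⊤ : LieIdeal ℂ g),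
        ∃ n ∈ LieModule.lowerCentralSeries ℂ g g (k-1), ⁅u, n⁆ = m} := by
      rw [← LieSubmodule.lieIdeal_oper_eq_linear_span', ← LieModule.lowerCentralSeries_succ]
      have : k - 1 + 1 = k := by omega
      rw [this]
      exact hz
    refine Submodule.span_induction ?_ ?_ ?_ ?_ hz'
    · rintro m ⟨u, -, n, hn, rfl⟩
      have := key n hn u
      rw [dCE_apply] at this
      have hsk : α ⁅u, n⁆ = -α ⁅n, u⁆ := by rw [← lie_skew, map_neg]
      rw [hsk]
      simp only [neg_eq_zero] at this ⊢
      exact this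
    · simp
    · intro m₁ m₂ _ _ h1 h2; rw [map_add, h1, h2, add_zero]
    · intro c m _ h1; rw [map_smul, h1, smul_zero]
  · -- hard direction
    intro hα
    obtain ⟨N, hN⟩ := (LieModule.isNilpotent_iff ℂ g g).mp inferInstance
    -- projections
    have hproj : ∀ a : ℕ, ∃ π : g →ₗ[ℂ] g,
        (∀ x ∈ LieModule.lowerCentralSeries ℂ g g a, π x = x) ∧
        (∀ x, π x ∈ LieModule.lowerCentralSeries ℂ g g a) := by
      intro a
      set V : Submodule ℂ g := (LieModule.lowerCentralSeries ℂ g g a : Submodule ℂ g)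
      obtain ⟨q, hq⟩ := V.exists_isCompl
      refine ⟨V.subtype.comp (V.projectionOnto q hq), ?_, ?_⟩
      · intro x hx
        have : (V.projectionOnto q hq) x = ⟨x, hx⟩ :=
          Submodule.projectionOnto_apply_left hq ⟨x, hx⟩
        simp [this]
      · intro x
        exact (V.projectionOnto q hq x).2
    choose π hπ1 hπ2 using hproj
    set p : ℕ → g →ₗ[ℂ] g := fun a => π a - π (a+1) with hp
    have hid : ∀ x : g, ∑ a ∈ Finset.range N, p a x = x := by
      intro x
      have htel : ∑ a ∈ Finset.range N, ((π a) x - (π (a+1)) x) = π 0 x - π N x :=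
        Finset.sum_range_sub' (fun a => π a x) N
      simp only [hp, LinearMap.sub_apply]
      rw [htel]
      rw [hπ1 0 x (LieSubmodule.mem_top x)]
      have : π N x ∈ LieModule.lowerCentralSeries ℂ g g N := hπ2 N x
      rw [hN] at this
      rw [(LieSubmodule.mem_bot _).mp this, sub_zero]
    have hker : ∀ a, ∀ x ∈ LieModule.lowerCentralSeries ℂ g g (a+1), p a x = 0 := by
      intro a x hx
      have h1 : x ∈ LieModule.lowerCentralSeries ℂ g g a :=
        LieModule.antitone_lowerCentralSeries ℂ g g (Nat.le_succ a) hx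
      simp [hp, hπ1 a x h1, hπ1 (a+1) x hx]
    have hrange : ∀ a (x : g), p a x ∈ LieModule.lowerCentralSeries ℂ g g a := by
      intro a x
      simp only [hp, LinearMap.sub_apply]
      exact sub_mem (hπ2 a x) (LieModule.antitone_lowerCentralSeries ℂ g g (Nat.le_succ a)
        (hπ2 (a+1) x))
    set Bab : ℕ → ℕ → (g →ₗ[ℂ] g →ₗ[ℂ] ℂ) :=
      fun a b => ((dCE g α).comp (p a)).compl₂ (p b) with hBab
    have hBab_apply : ∀ a b x y, Bab a b x y = dCE g α (p a x) (p b y) := by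
      intro a b x y; rfl
    have hsum : ∀ x y : g, dCE g α x y
        = ∑ a ∈ Finset.range N, ∑ b ∈ Finset.range N, Bab a b x y := by
      intro x y
      simp only [hBab_apply]
      conv_lhs => rw [← hid x]
      rw [map_sum, LinearMap.sum_apply]
      refine Finset.sum_congr rfl fun a _ => ?_
      conv_lhs => rw [← hid y]
      rw [map_sum]
    have hskew : ∀ x y : g, dCE g α y x = -dCE g α x y := by
      intro x y
      rw [dCE_apply, dCE_apply, ← lie_skew, map_neg, neg_neg]
    -- each Bab either vanishes or contributes
    have hmain : ∀ a b : ℕ, (Bab a b - (Bab a b).flip) ∈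
        Submodule.span ℂ {W : g →ₗ[ℂ] g →ₗ[ℂ] ℂ |
        ∃ i j : ℕ, i + j ≤ k ∧ ∃ β γ : Module.Dual ℂ g,
          (∀ z ∈ LieModule.lowerCentralSeries ℂ g g i, β z = 0) ∧
          (∀ z ∈ LieModule.lowerCentralSeries ℂ g g j, γ z = 0) ∧
          W = wedgeDual g β γ} := by
      intro a b
      by_cases hab : k ≤ a + b + 1
      · -- Bab = 0
        have hzero : Bab a b = 0 := by
          ext x y
          rw [hBab_apply, dCE_apply]
          have : ⁅p a x, p b y⁆ ∈ LieModule.lowerCentralSeries ℂ g g (a + b + 1) :=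
            lcs_lie b a _ _ (hrange a x) (hrange b y)
          have hz : ⁅p a x, p b y⁆ ∈ LieModule.lowerCentralSeries ℂ g g k :=
            LieModule.antitone_lowerCentralSeries ℂ g g hab this
          simp [hα _ hz]
        have hfz : (0 : g →ₗ[ℂ] g →ₗ[ℂ] ℂ).flip = 0 := by ext x y; rfl
        rw [hzero, hfz, sub_zero]
        exact Submodule.zero_mem _
      · -- a+1 + (b+1) ≤ k
        push_neg at hab
        have hS : ∀ x ∈ (LieModule.lowerCentralSeries ℂ g g (a+1) : Submodule ℂ g),
            Bab a b x = 0 := by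
          intro x hx
          ext y
          rw [hBab_apply, hker a x hx]
          simp
        have hT : ∀ x : g, ∀ y ∈ (LieModule.lowerCentralSeries ℂ g g (b+1) : Submodule ℂ g),
            Bab a b x y = 0 := by
          intro x y hy
          rw [hBab_apply, hker b y hy]
          simp
        have := tensorDecomp _ _ (Bab a b) hS hT
        refine Submodule.span_mono ?_ this
        rintro W ⟨β, γ, hβ, hγ, rfl⟩
        exact ⟨a+1, b+1, by omega, β, γ,
          fun z hz => hβ z ((LieSubmodule.mem_toSubmodule _).mpr hz),
          fun z hz => hγ z ((LieSubmodule.mem_toSubmodule _).mpr hz), rfl⟩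
    have h2 : dCE g α = (2⁻¹ : ℂ) • ∑ a ∈ Finset.range N, ∑ b ∈ Finset.range N,
        (Bab a b - (Bab a b).flip) := by
      ext x y
      simp only [LinearMap.smul_apply, LinearMap.coe_sum, Finset.sum_apply,
        LinearMap.sub_apply, LinearMap.flip_apply, smul_eq_mul]
      have e1 : ∑ a ∈ Finset.range N, ∑ b ∈ Finset.range N, (Bab a b x y - Bab a b y x)
          = (∑ a ∈ Finset.range N, ∑ b ∈ Finset.range N, Bab a b x y)
            - ∑ a ∈ Finset.range N, ∑ b ∈ Finset.range N, Bab a b y x := by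
        rw [← Finset.sum_sub_distrib]
        exact Finset.sum_congr rfl fun a _ => by rw [← Finset.sum_sub_distrib]
      rw [e1, ← hsum x y, ← hsum y x, hskew x y]
      ring
    rw [h2]
    exact Submodule.smul_mem _ _ (Submodule.sum_mem _ fun a _ =>
      Submodule.sum_mem _ fun b _ => hmain a b)
end

section
/- Let g and g' be Lie algebras with g' non-abelian and a a nonzero abelian Lie algebra, and set g = g' ⊕ a (direct sum of Lie algebras). Then g/C₂g ≅ (g'/C₂g') ⊕ a, and this quotient is not isomorphic to a free 2-step nilpotent Lie algebra b_m for any m, because the center of the abelianization quotient contributes generators whose brackets vanish while b_m has the property that the bracket map Λ²(b_m/[b_m,b_m]) → [b_m,b_m] is injective. -/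
/-- The product of two Lie rings, with componentwise bracket. -/
instance prodLieRing (L M : Type*) [LieRing L] [LieRing M] : LieRing (L × M) where
  bracket x y := (⁅x.1, y.1⁆, ⁅x.2, y.2⁆)
  add_lie x y z := by
    show (⁅(x + y).1, z.1⁆, ⁅(x + y).2, z.2⁆)
        = (⁅x.1, z.1⁆, ⁅x.2, z.2⁆) + (⁅y.1, z.1⁆, ⁅y.2, z.2⁆)
    simp [add_lie]
  lie_add x y z := by
    show (⁅x.1, (y + z).1⁆, ⁅x.2, (y + z).2⁆)
        = (⁅x.1, y.1⁆, ⁅x.2, y.2⁆) + (⁅x.1, z.1⁆, ⁅x.2, z.2⁆)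
    simp [lie_add]
  lie_self x := by
    show (⁅x.1, x.1⁆, ⁅x.2, x.2⁆) = 0
    simp
  leibniz_lie x y z := by
    show (⁅x.1, (⁅y.1, z.1⁆, ⁅y.2, z.2⁆).1⁆, ⁅x.2, (⁅y.1, z.1⁆, ⁅y.2, z.2⁆).2⁆)
        = (⁅(⁅x.1, y.1⁆, ⁅x.2, y.2⁆).1, z.1⁆, ⁅(⁅x.1, y.1⁆, ⁅x.2, y.2⁆).2, z.2⁆)
          + (⁅y.1, (⁅x.1, z.1⁆, ⁅x.2, z.2⁆).1⁆, ⁅y.2, (⁅x.1, z.1⁆, ⁅x.2, z.2⁆).2⁆)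
    rw [Prod.mk_add_mk]
    exact Prod.ext (by dsimp; rw [leibniz_lie]) (by dsimp; rw [leibniz_lie])

instance prodLieAlgebra (L M : Type*) [LieRing L] [LieAlgebra ℂ L] [LieRing M]
    [LieAlgebra ℂ M] : LieAlgebra ℂ (L × M) where
  lie_smul c x y := by
    show (⁅x.1, (c • y).1⁆, ⁅x.2, (c • y).2⁆) = c • (⁅x.1, y.1⁆, ⁅x.2, y.2⁆)
    simp [lie_smul]

/-- The wedge of two elements of a module, as an element of the second exterior power. -/
noncomputable def wedge2 {M : Type*} [AddCommGroup M] [Module ℂ M] (x y : M) :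
    ⋀[ℂ]^2 M :=
  ⟨ExteriorAlgebra.ιMulti ℂ 2 ![x, y],
    ExteriorAlgebra.ιMulti_range ℂ 2 (Set.mem_range_self _)⟩

/-- `h` is a free 2-step nilpotent Lie algebra: the map `Λ²(h/[h,h]) → [h,h]` induced by the
Lie bracket is bijective. -/
noncomputable def IsFreeTwoStep (h : Type*) [LieRing h] [LieAlgebra ℂ h] : Prop :=
  ∃ b' : (⋀[ℂ]^2 (h ⧸ LieSubmodule.toSubmodule (LieModule.lowerCentralSeries ℂ h h 1))) →ₗ[ℂ]
      LieSubmodule.toSubmodule (LieModule.lowerCentralSeries ℂ h h 1),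
    (∀ x y : h,
      (b' (wedge2 (Submodule.Quotient.mk x) (Submodule.Quotient.mk y)) : h) = ⁅x, y⁆) ∧
    Function.Bijective b'


open LieModule LieSubmodule in
lemma lcs_prod (L M : Type*) [LieRing L] [LieAlgebra ℂ L] [LieRing M] [LieAlgebra ℂ M] :
    ∀ k : ℕ, LieSubmodule.toSubmodule (lowerCentralSeries ℂ (L × M) (L × M) k) =
      (LieSubmodule.toSubmodule (lowerCentralSeries ℂ L L k)).prod
        (LieSubmodule.toSubmodule (lowerCentralSeries ℂ M M k))
  | 0 => by simp
  | (k+1) => by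
    rw [lowerCentralSeries_succ, lowerCentralSeries_succ, lowerCentralSeries_succ,
      lieIdeal_oper_eq_linear_span', lieIdeal_oper_eq_linear_span',
      lieIdeal_oper_eq_linear_span']
    apply le_antisymm
    · rw [Submodule.span_le]
      rintro _ ⟨x, -, n, hn, rfl⟩
      rw [← LieSubmodule.mem_toSubmodule, lcs_prod L M k] at hn
      constructor
      · exact Submodule.subset_span ⟨x.1, trivial, n.1, hn.1, rfl⟩
      · exact Submodule.subset_span ⟨x.2, trivial, n.2, hn.2, rfl⟩
    · rintro ⟨u, v⟩ ⟨hu, hv⟩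
      have h1 : ((u, 0) : L × M) ∈ Submodule.span ℂ
          {m : L × M | ∃ x ∈ (⊤ : LieIdeal ℂ (L × M)),
            ∃ n ∈ lowerCentralSeries ℂ (L × M) (L × M) k, ⁅x, n⁆ = m} := by
        refine Submodule.span_induction
          (p := fun w _ => ((w, 0) : L × M) ∈ Submodule.span ℂ
            {m : L × M | ∃ x ∈ (⊤ : LieIdeal ℂ (L × M)),
              ∃ n ∈ lowerCentralSeries ℂ (L × M) (L × M) k, ⁅x, n⁆ = m}) ?_ ?_ ?_ ?_ hu
        · rintro _ ⟨x, -, n, hn, rfl⟩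
          refine Submodule.subset_span ⟨(x, 0), trivial, (n, 0), ?_, ?_⟩
          · rw [← LieSubmodule.mem_toSubmodule, lcs_prod L M k]
            exact ⟨hn, Submodule.zero_mem _⟩
          · show ((⁅x, n⁆, ⁅(0 : M), (0 : M)⁆) : L × M) = _
            simp
        · exact Submodule.zero_mem _
        · intro a b _ _ ha hb
          have := Submodule.add_mem _ ha hb
          simpa using this
        · intro c a _ ha
          have := Submodule.smul_mem _ c ha
          simpa using this
      have h2 : ((0, v) : L × M) ∈ Submodule.span ℂ
          {m : L × M | ∃ x ∈ (⊤ : LieIdeal ℂ (L × M)),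
            ∃ n ∈ lowerCentralSeries ℂ (L × M) (L × M) k, ⁅x, n⁆ = m} := by
        refine Submodule.span_induction
          (p := fun w _ => ((0, w) : L × M) ∈ Submodule.span ℂ
            {m : L × M | ∃ x ∈ (⊤ : LieIdeal ℂ (L × M)),
              ∃ n ∈ lowerCentralSeries ℂ (L × M) (L × M) k, ⁅x, n⁆ = m}) ?_ ?_ ?_ ?_ hv
        · rintro _ ⟨x, -, n, hn, rfl⟩
          refine Submodule.subset_span ⟨(0, x), trivial, (0, n), ?_, ?_⟩
          · rw [← LieSubmodule.mem_toSubmodule, lcs_prod L M k]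
            exact ⟨Submodule.zero_mem _, hn⟩
          · show ((⁅(0 : L), (0 : L)⁆, ⁅x, n⁆) : L × M) = _
            simp
        · exact Submodule.zero_mem _
        · intro a b _ _ ha hb
          have := Submodule.add_mem _ ha hb
          simpa using this
        · intro c a _ ha
          have := Submodule.smul_mem _ c ha
          simpa using this
      have := Submodule.add_mem _ h1 h2
      simpa using this

open LieModule LieSubmodule in
lemma abelian_lcs (a : Type*) [LieRing a] [LieAlgebra ℂ a] [IsLieAbelian a] (k : ℕ) :
    lowerCentralSeries ℂ a a (k + 1) = ⊥ := by
  apply le_bot_iff.mp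
  rw [lowerCentralSeries_succ, LieSubmodule.lie_le_iff]
  intro x _ m _
  simp [trivial_lie_zero]

open LieModule LieSubmodule in
noncomputable def stmtEquiv (g' a : Type*) [LieRing g'] [LieAlgebra ℂ g'] [LieRing a]
    [LieAlgebra ℂ a] [IsLieAbelian a] :
    ((g' × a) ⧸ lowerCentralSeries ℂ (g' × a) (g' × a) 2) ≃ₗ⁅ℂ⁆
      ((g' ⧸ lowerCentralSeries ℂ g' g' 2) × a) := by
  set P : Submodule ℂ (g' × a) :=
    LieSubmodule.toSubmodule (lowerCentralSeries ℂ (g' × a) (g' × a) 2) with hPdef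
  set p : Submodule ℂ g' := LieSubmodule.toSubmodule (lowerCentralSeries ℂ g' g' 2) with hpdef
  have hP : P = p.prod ⊥ := by
    rw [hPdef, lcs_prod]
    congr 1
    rw [abelian_lcs]
    rfl
  set Φ : (g' × a) →ₗ[ℂ] (g' ⧸ lowerCentralSeries ℂ g' g' 2) × a :=
    (p.mkQ.comp (LinearMap.fst ℂ g' a)).prod (LinearMap.snd ℂ g' a) with hΦdef
  have hΦ : ∀ x : g' × a, Φ x = (Submodule.Quotient.mk x.1, x.2) := fun x => rfl
  have hker : P ≤ LinearMap.ker Φ := by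
    intro x hx
    rw [hP, Submodule.mem_prod] at hx
    rw [LinearMap.mem_ker, hΦ]
    ext
    · exact (Submodule.Quotient.mk_eq_zero p).mpr hx.1
    · simpa using hx.2
  set F : ((g' × a) ⧸ lowerCentralSeries ℂ (g' × a) (g' × a) 2) →ₗ[ℂ]
      ((g' ⧸ lowerCentralSeries ℂ g' g' 2) × a) := P.liftQ Φ hker with hFdef
  have h1 : p ≤ LinearMap.ker (P.mkQ.comp (LinearMap.inl ℂ g' a)) := by
    intro x hx
    rw [LinearMap.mem_ker]
    simp only [LinearMap.comp_apply, LinearMap.inl_apply, Submodule.mkQ_apply,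
      Submodule.Quotient.mk_eq_zero, hP, Submodule.mem_prod]
    exact ⟨hx, Submodule.zero_mem _⟩
  set G₁ : (g' ⧸ lowerCentralSeries ℂ g' g' 2) →ₗ[ℂ]
      ((g' × a) ⧸ lowerCentralSeries ℂ (g' × a) (g' × a) 2) :=
    p.liftQ (P.mkQ.comp (LinearMap.inl ℂ g' a)) h1 with hG₁def
  set G : ((g' ⧸ lowerCentralSeries ℂ g' g' 2) × a) →ₗ[ℂ]
      ((g' × a) ⧸ lowerCentralSeries ℂ (g' × a) (g' × a) 2) :=
    G₁.comp (LinearMap.fst ℂ _ a) + ((P.mkQ.comp (LinearMap.inr ℂ g' a)).comp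
      (LinearMap.snd ℂ _ a) : ((g' ⧸ lowerCentralSeries ℂ g' g' 2) × a) →ₗ[ℂ]
        ((g' × a) ⧸ lowerCentralSeries ℂ (g' × a) (g' × a) 2)) with hGdef
  set mkL : (g' × a) → ((g' × a) ⧸ lowerCentralSeries ℂ (g' × a) (g' × a) 2) :=
    LieSubmodule.Quotient.mk (N := lowerCentralSeries ℂ (g' × a) (g' × a) 2) with hmkLdef
  have key1 : ∀ x : g' × a, F (mkL x) = (Submodule.Quotient.mk x.1, x.2) := fun x => rfl
  have key2 : ∀ x : g' × a, G (Submodule.Quotient.mk x.1, x.2) = mkL x := by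
    intro x
    have h2 : G (Submodule.Quotient.mk x.1, x.2) = mkL (x.1, 0) + mkL (0, x.2) := rfl
    rw [h2, hmkLdef]
    show Submodule.Quotient.mk (p := P) _ + Submodule.Quotient.mk (p := P) _ = _
    rw [← Submodule.Quotient.mk_add]
    congr 1
    simp
  have surj : ∀ q : ((g' × a) ⧸ lowerCentralSeries ℂ (g' × a) (g' × a) 2),
      ∃ x : g' × a, mkL x = q := fun q => Submodule.Quotient.mk_surjective P q
  set E : ((g' × a) ⧸ lowerCentralSeries ℂ (g' × a) (g' × a) 2) ≃ₗ[ℂ]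
      ((g' ⧸ lowerCentralSeries ℂ g' g' 2) × a) :=
    LinearEquiv.ofLinear F G
      (by
        refine LinearMap.ext ?_
        rintro ⟨q, w⟩
        obtain ⟨y, rfl⟩ := Submodule.Quotient.mk_surjective p q
        have h := key2 (y, w)
        rw [LinearMap.comp_apply]
        rw [show ((Submodule.Quotient.mk y : g' ⧸ p), w)
            = ((Submodule.Quotient.mk y : g' ⧸ lowerCentralSeries ℂ g' g' 2), w) from rfl] at h ⊢
        rw [h, key1 (y, w), LinearMap.id_apply])
      (by
        refine LinearMap.ext ?_
        intro q
        obtain ⟨x, rfl⟩ := surj q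
        rw [LinearMap.comp_apply, key1 x, key2 x, LinearMap.id_apply]) with hEdef
  have ekey : ∀ x : g' × a, E (mkL x) = (Submodule.Quotient.mk x.1, x.2) := key1
  exact
    { toLinearMap := E.toLinearMap
      map_lie' := by
        intro x y
        obtain ⟨u, rfl⟩ := surj x
        obtain ⟨v, rfl⟩ := surj y
        have hb : ⁅mkL u, mkL v⁆ = mkL ⁅u, v⁆ := rfl
        show E ⁅mkL u, mkL v⁆ = ⁅E (mkL u), E (mkL v)⁆
        rw [hb, ekey, ekey, ekey]
        rfl
      invFun := E.invFun
      left_inv := E.left_inv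
      right_inv := E.right_inv }

open LieModule LieSubmodule in
lemma quot_lcs1_le (L : Type*) [LieRing L] [LieAlgebra ℂ L] (N : LieIdeal ℂ L) :
    LieSubmodule.toSubmodule (lowerCentralSeries ℂ (L ⧸ N) (L ⧸ N) 1) ≤
      Submodule.map ((LieSubmodule.toSubmodule N).mkQ : L →ₗ[ℂ] (L ⧸ N))
        (LieSubmodule.toSubmodule (lowerCentralSeries ℂ L L 1)) := by
  rw [show (1 : ℕ) = 0 + 1 from rfl, LieModule.lowerCentralSeries_succ,
    LieModule.lowerCentralSeries_succ, lieIdeal_oper_eq_linear_span', Submodule.span_le]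
  rintro _ ⟨α, -, β, -, rfl⟩
  obtain ⟨u, rfl⟩ : ∃ u : L, LieSubmodule.Quotient.mk (N := N) u = α :=
    Submodule.Quotient.mk_surjective _ α
  obtain ⟨v, rfl⟩ : ∃ v : L, LieSubmodule.Quotient.mk (N := N) v = β :=
    Submodule.Quotient.mk_surjective _ β
  exact ⟨⁅u, v⁆, (LieSubmodule.mem_toSubmodule _).mpr
    (LieSubmodule.lie_mem_lie (LieSubmodule.mem_top u) (LieSubmodule.mem_top v)), rfl⟩

open LieModule LieSubmodule in
lemma mem_lcs1_of_quot (L : Type*) [LieRing L] [LieAlgebra ℂ L] (N : LieIdeal ℂ L)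
    (hNle : N ≤ lowerCentralSeries ℂ L L 1) (w : L)
    (hw : (LieSubmodule.Quotient.mk (N := N) w) ∈
      LieSubmodule.toSubmodule (lowerCentralSeries ℂ (L ⧸ N) (L ⧸ N) 1)) :
    w ∈ LieSubmodule.toSubmodule (lowerCentralSeries ℂ L L 1) := by
  obtain ⟨w', hw', heq⟩ := quot_lcs1_le L N hw
  have hsub : w' - w ∈ LieSubmodule.toSubmodule N := by
    rw [← Submodule.Quotient.eq]
    exact heq
  have hsub' : w' - w ∈ LieSubmodule.toSubmodule (lowerCentralSeries ℂ L L 1) := by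
    rw [LieSubmodule.mem_toSubmodule] at hsub ⊢
    exact hNle hsub
  have : w' - (w' - w) ∈ LieSubmodule.toSubmodule (lowerCentralSeries ℂ L L 1) :=
    Submodule.sub_mem _ hw' hsub'
  simpa using this

set_option maxHeartbeats 2000000 in
open LieModule LieSubmodule in
/-- If `g'` is non-abelian (nilpotent) and `a ≠ 0` is abelian, then for
`g = g' ⊕ a` one has `g/C₂g ≅ (g'/C₂g') ⊕ a`, and this quotient is not a free 2-step
nilpotent Lie algebra. -/
theorem stmt11 (g' a : Type*) [LieRing g'] [LieAlgebra ℂ g'] [LieRing.IsNilpotent g']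
    [FiniteDimensional ℂ g'] (hna : ¬IsLieAbelian g')
    [LieRing a] [LieAlgebra ℂ a] [IsLieAbelian a] [Nontrivial a] [FiniteDimensional ℂ a] :
    Nonempty (((g' × a) ⧸ LieModule.lowerCentralSeries ℂ (g' × a) (g' × a) 2) ≃ₗ⁅ℂ⁆
      ((g' ⧸ LieModule.lowerCentralSeries ℂ g' g' 2) × a)) ∧
    ¬ IsFreeTwoStep ((g' × a) ⧸ LieModule.lowerCentralSeries ℂ (g' × a) (g' × a) 2) := by
  refine ⟨⟨stmtEquiv g' a⟩, ?_⟩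
  set N := lowerCentralSeries ℂ (g' × a) (g' × a) 2 with hNdef
  rintro ⟨b', hb, hinj, -⟩
  -- there is x ∉ [g', g']
  have hne : lowerCentralSeries ℂ g' g' 1 ≠ ⊤ := by
    intro htop
    have htop' : ⁅(⊤ : LieIdeal ℂ g'), (⊤ : LieSubmodule ℂ g' g')⁆ = ⊤ := by
      have := htop
      rwa [show (1 : ℕ) = 0 + 1 from rfl, LieModule.lowerCentralSeries_succ,
        LieModule.lowerCentralSeries_zero] at this
    have hall : ∀ k, lowerCentralSeries ℂ g' g' k = ⊤ := by
      intro k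
      induction k with
      | zero => exact LieModule.lowerCentralSeries_zero ℂ g' g'
      | succ k ih => rw [LieModule.lowerCentralSeries_succ, ih]; exact htop'
    obtain ⟨k, hk⟩ := (LieModule.isNilpotent_iff (R := ℂ) (L := g') (M := g')).mp inferInstance
    have hbot : (⊤ : LieSubmodule ℂ g' g') = ⊥ := by rw [← hall k, hk]
    have hsub : Subsingleton g' := by
      refine subsingleton_of_forall_eq 0 fun y => ?_
      have : y ∈ (⊥ : LieSubmodule ℂ g' g') := hbot ▸ LieSubmodule.mem_top y
      simpa using this
    exact hna ⟨fun x m => Subsingleton.elim _ _⟩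
  obtain ⟨x, hx⟩ : ∃ x : g', x ∉ lowerCentralSeries ℂ g' g' 1 := by
    by_contra hcon
    push_neg at hcon
    exact hne (by
      rw [← LieSubmodule.toSubmodule_eq_top]
      exact Submodule.eq_top_iff'.mpr fun y => (LieSubmodule.mem_toSubmodule _).mpr (hcon y))
  obtain ⟨z, hz⟩ := exists_ne (0 : a)
  set ζ : (g' × a) ⧸ N := LieSubmodule.Quotient.mk (N := N) ((0, z) : g' × a) with hζdef
  set ξ : (g' × a) ⧸ N := LieSubmodule.Quotient.mk (N := N) ((x, 0) : g' × a) with hξdef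
  -- the bracket of ζ and ξ vanishes
  have hbr : ⁅ζ, ξ⁆ = (0 : (g' × a) ⧸ N) := by
    have h1 : ⁅ζ, ξ⁆ = LieSubmodule.Quotient.mk (N := N) ⁅((0, z) : g' × a), (x, 0)⁆ := rfl
    rw [h1]
    have h2 : (⁅((0, z) : g' × a), (x, 0)⁆ : g' × a) = 0 := by
      show ((⁅(0 : g'), x⁆, ⁅z, (0 : a)⁆) : g' × a) = 0
      simp
    rw [h2]
    simp
  have hb0 : b' (wedge2 (Submodule.Quotient.mk ζ) (Submodule.Quotient.mk ξ)) = 0 := by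
    apply Subtype.ext
    rw [hb ζ ξ, hbr]
    rfl
  set K : Submodule ℂ ((g' × a) ⧸ N) :=
    LieSubmodule.toSubmodule (lowerCentralSeries ℂ ((g' × a) ⧸ N) ((g' × a) ⧸ N) 1) with hKdef
  set u : ((g' × a) ⧸ N) ⧸ K := Submodule.Quotient.mk ζ with hudef
  set v : ((g' × a) ⧸ N) ⧸ K := Submodule.Quotient.mk ξ with hvdef
  have hw0 : (ExteriorAlgebra.ιMulti ℂ 2 ![u, v]) = 0 := by
    have := hinj (a₁ := wedge2 (Submodule.Quotient.mk ζ) (Submodule.Quotient.mk ξ))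
      (a₂ := 0) (by rw [hb0, map_zero])
    exact congrArg Subtype.val this
  -- linear independence of the classes of ζ and ξ
  have hli : LinearIndependent ℂ ![u, v] := by
    rw [LinearIndependent.pair_iff]
    intro s t hst
    have h3 : s • u + t • v = Submodule.Quotient.mk (p := K) (s • ζ + t • ξ) := by
      rw [Submodule.Quotient.mk_add, Submodule.Quotient.mk_smul, Submodule.Quotient.mk_smul]
    rw [h3, Submodule.Quotient.mk_eq_zero] at hst
    have h4 : s • ζ + t • ξ = LieSubmodule.Quotient.mk (N := N) ((t • x, s • z) : g' × a) := by
      have hr : s • ζ + t • ξ = LieSubmodule.Quotient.mk (N := N)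
          (s • (((0 : g'), z) : g' × a) + t • ((x, (0 : a)) : g' × a)) := rfl
      rw [hr]
      congr 1
      show (((s • (0 : g'), s • z) : g' × a) + ((t • x, t • (0 : a)) : g' × a)) = _
      simp
    rw [h4] at hst
    have h5 := mem_lcs1_of_quot (g' × a) N
      (antitone_lowerCentralSeries ℂ (g' × a) (g' × a) (by norm_num)) _ hst
    rw [lcs_prod] at h5
    obtain ⟨h5l, h5r⟩ := h5
    constructor
    · have hsz : s • z = 0 := by
        have := h5r
        rw [abelian_lcs a 0] at this
        simpa using this
      rcases smul_eq_zero.mp hsz with h | h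
      · exact h
      · exact absurd h hz
    · by_contra ht
      apply hx
      rw [← LieSubmodule.mem_toSubmodule]
      have := (LieSubmodule.toSubmodule (lowerCentralSeries ℂ g' g' 1)).smul_mem t⁻¹ h5l
      rwa [smul_smul, inv_mul_cancel₀ ht, one_smul] at this
  -- build dual functionals
  have hne_uv : u ≠ v := by
    intro he
    have h01 : ![u, v] 0 = ![u, v] 1 := by simpa using he
    have := hli.injective h01
    exact absurd this (by decide)
  have hsr : LinearIndepOn ℂ id (Set.range ![u, v]) :=
    (linearIndepOn_id_range_iff hli.injective).mpr hli
  set B := Module.Basis.extend hsr with hBdef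
  have hu_mem : u ∈ hsr.extend (Set.subset_univ _) :=
    hsr.subset_extend _ ⟨0, rfl⟩
  have hv_mem : v ∈ hsr.extend (Set.subset_univ _) :=
    hsr.subset_extend _ ⟨1, rfl⟩
  set f : (((g' × a) ⧸ N) ⧸ K) →ₗ[ℂ] ℂ := B.coord ⟨u, hu_mem⟩ with hfdef
  set g : (((g' × a) ⧸ N) ⧸ K) →ₗ[ℂ] ℂ := B.coord ⟨v, hv_mem⟩ with hgdef
  have hBu : B ⟨u, hu_mem⟩ = u := Module.Basis.extend_apply_self hsr _
  have hBv : B ⟨v, hv_mem⟩ = v := Module.Basis.extend_apply_self hsr _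
  have hfu : f u = 1 := by
    have step : f u = f (B ⟨u, hu_mem⟩) := by rw [hBu]
    rw [step, hfdef, Module.Basis.coord_apply, Module.Basis.repr_self, Finsupp.single_eq_same]
  have hfv : f v = 0 := by
    have step : f v = f (B ⟨v, hv_mem⟩) := by rw [hBv]
    rw [step, hfdef, Module.Basis.coord_apply, Module.Basis.repr_self]
    exact Finsupp.single_eq_of_ne (fun hc => hne_uv (congrArg Subtype.val hc))
  have hgu : g u = 0 := by
    have step : g u = g (B ⟨u, hu_mem⟩) := by rw [hBu]
    rw [step, hgdef, Module.Basis.coord_apply, Module.Basis.repr_self]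
    exact Finsupp.single_eq_of_ne (fun hc => hne_uv.symm (congrArg Subtype.val hc))
  have hgv : g v = 1 := by
    have step : g v = g (B ⟨v, hv_mem⟩) := by rw [hBv]
    rw [step, hgdef, Module.Basis.coord_apply, Module.Basis.repr_self, Finsupp.single_eq_same]
  set φ : (((g' × a) ⧸ N) ⧸ K) →ₗ[ℂ] (Fin 2 → ℂ) := LinearMap.pi ![f, g] with hφdef
  set ω : (((g' × a) ⧸ N) ⧸ K) [⋀^Fin 2]→ₗ[ℂ] ℂ :=
    (Matrix.detRowAlternating : (Fin 2 → ℂ) [⋀^Fin 2]→ₗ[ℂ] ℂ).compLinearMap φ with hωdef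
  set fam : ∀ i : ℕ, (((g' × a) ⧸ N) ⧸ K) [⋀^Fin i]→ₗ[ℂ] ℂ := fun i =>
    match i with
    | 2 => ω
    | _ => 0
    with hfamdef
  have hlift : ExteriorAlgebra.liftAlternating fam
      (ExteriorAlgebra.ιMulti ℂ 2 ![u, v]) = ω ![u, v] :=
    ExteriorAlgebra.liftAlternating_apply_ιMulti fam ![u, v]
  have hω1 : ω ![u, v] = 1 := by
    have h0 : ω ![u, v] = Matrix.det (Matrix.of fun i j => φ (![u, v] i) j) := rfl
    rw [h0, Matrix.det_fin_two]
    have e00 : (Matrix.of fun i j => φ (![u, v] i) j) 0 0 = f u := rfl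
    have e01 : (Matrix.of fun i j => φ (![u, v] i) j) 0 1 = g u := rfl
    have e10 : (Matrix.of fun i j => φ (![u, v] i) j) 1 0 = f v := rfl
    have e11 : (Matrix.of fun i j => φ (![u, v] i) j) 1 1 = g v := rfl
    rw [e00, e01, e10, e11, hfu, hfv, hgu, hgv]
    ring
  rw [hw0, map_zero] at hlift
  rw [hω1] at hlift
  exact zero_ne_one hlift
end
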